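/- arXiv:1007.3507 — 2 statements merged into one kernel-verified Lean document; each statement's English description precedes it below -/
import Mathlib

section
/- Let $d\ge2$ and let $h(\theta) = \frac{1}{2d}[2(d-1)e^{\theta} + \frac{2d-1}{1+2(d-1)e^{\theta}} + 1]$ for $\theta \ge \theta_0 := \log\frac{\sqrt{2d-1}-1}{2(d-1)}$ and $h(\theta) = \frac{\sqrt{2d-1}}{d}$ for $\theta < \theta_0$. Then $\log h$ is convex and differentiable on $\mathbb{R}$ (in particular the two pieces match in value and derivative at $\theta_0$), and $h(0) = 1$. -/
open Asymptotics in
lemma glue_hasDerivAt {f1 f2 : ℝ → ℝ} {x k : ℝ} (h1 : HasDerivAt f1 k x)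
    (h2 : HasDerivAt f2 k x) (he : f1 x = f2 x) :
    HasDerivAt (fun t => if t < x then f1 t else f2 t) k x := by
  rw [hasDerivAt_iff_isLittleO] at h1 h2 ⊢
  rw [isLittleO_iff] at h1 h2 ⊢
  intro c hc
  filter_upwards [h1 hc, h2 hc] with t ht1 ht2
  by_cases htx : t < x
  · simpa [htx, lt_irrefl, he] using ht1
  · simpa [htx, lt_irrefl] using ht2

lemma key_ineq (c v1 v2 : ℝ) (hc : 3 ≤ c) (h1 : 1 ≤ v1) (hv1 : c ≤ v1^2) (h12 : v1 ≤ v2) :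
    (v1-1)*(v1^2-c) * (v2*(v2^2+c)) ≤ (v2-1)*(v2^2-c) * (v1*(v1^2+c)) := by
  have hv2 : c ≤ v2^2 := hv1.trans (by nlinarith)
  have h2 : 1 ≤ v2 := h1.trans h12
  have hc0 : (0:ℝ) ≤ c := by linarith
  have hd : (0:ℝ) ≤ v2 - v1 := by linarith
  have e1 : (0:ℝ) ≤ (v2-v1) * ((v1^2-c)*(v2^2-c)) :=
    mul_nonneg hd (mul_nonneg (by linarith) (by linarith))
  have e2 : (0:ℝ) ≤ (v2-v1) * (2*c*(v1^2*v2-c)) := by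
    have h3 : c ≤ v1^2*v2 := hv1.trans (by nlinarith)
    exact mul_nonneg hd (mul_nonneg (by linarith) (by linarith))
  have e3 : (0:ℝ) ≤ (v2-v1) * (2*c*(v1*v2*(v2-1))) := by
    have h4 : (0:ℝ) ≤ v1*v2*(v2-1) :=
      mul_nonneg (mul_nonneg (by linarith) (by linarith)) (by linarith)
    exact mul_nonneg hd (mul_nonneg (by linarith) h4)
  nlinarith [e1, e2, e3]

lemma f_hasDerivAt (D a c θ : ℝ) (hD : 2 ≤ D) (ha : a = 2*(D-1)) :
    HasDerivAt (fun θ : ℝ => 1 / (2 * D) * (a * Real.exp θ + c / (1 + a * Real.exp θ) + 1))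
      (a * Real.exp θ * ((1 + a * Real.exp θ)^2 - c) / (2 * D * (1 + a * Real.exp θ)^2)) θ := by
  have ha0 : 0 < a := by rw [ha]; linarith
  have hu : 0 < a * Real.exp θ := mul_pos ha0 (Real.exp_pos θ)
  have hv : 0 < 1 + a * Real.exp θ := by linarith
  have h1 : HasDerivAt (fun θ : ℝ => a * Real.exp θ) (a * Real.exp θ) θ :=
    (Real.hasDerivAt_exp θ).const_mul a
  have h2 : HasDerivAt (fun θ : ℝ => 1 + a * Real.exp θ) (a * Real.exp θ) θ := h1.const_add 1
  have h3 : HasDerivAt (fun θ : ℝ => c / (1 + a * Real.exp θ))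
      ((0 * (1 + a * Real.exp θ) - c * (a * Real.exp θ)) / (1 + a * Real.exp θ)^2) θ :=
    (hasDerivAt_const θ c).div h2 (ne_of_gt hv)
  have h4 := ((h1.add h3).add_const 1).const_mul (1 / (2 * D))
  refine h4.congr_deriv ?_
  have hDne : D ≠ 0 := by linarith
  have hvne : 1 + a * Real.exp θ ≠ 0 := ne_of_gt hv
  field_simp
  ring

set_option maxHeartbeats 1000000 in
theorem stmt10 (d : ℕ) (hd : 2 ≤ d) (θ0 : ℝ)
    (hθ0 : θ0 = Real.log ((Real.sqrt (2 * d - 1) - 1) / (2 * (d - 1))))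
    (h : ℝ → ℝ)
    (hh : ∀ θ : ℝ, h θ =
      if θ < θ0 then Real.sqrt (2 * d - 1) / d
      else 1 / (2 * d) * (2 * (d - 1) * Real.exp θ
        + (2 * d - 1) / (1 + 2 * (d - 1) * Real.exp θ) + 1)) :
    ConvexOn ℝ Set.univ (fun θ => Real.log (h θ)) ∧
    Differentiable ℝ (fun θ => Real.log (h θ)) ∧
    1 / (2 * d) * (2 * (d - 1) * Real.exp θ0
        + (2 * d - 1) / (1 + 2 * (d - 1) * Real.exp θ0) + 1) = Real.sqrt (2 * d - 1) / d ∧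
    HasDerivAt (fun θ : ℝ => 1 / (2 * d) * (2 * (d - 1) * Real.exp θ
        + (2 * d - 1) / (1 + 2 * (d - 1) * Real.exp θ) + 1)) 0 θ0 ∧
    h 0 = 1 := by
  have hD : (2:ℝ) ≤ (d:ℝ) := by exact_mod_cast hd
  set D : ℝ := (d:ℝ) with hDdef
  set a : ℝ := 2 * (D - 1) with hadef
  set c : ℝ := 2 * D - 1 with hcdef
  set s : ℝ := Real.sqrt c with hsdef
  have hc3 : (3:ℝ) ≤ c := by rw [hcdef]; linarith
  have hc0 : (0:ℝ) ≤ c := by linarith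
  have hs2 : s ^ 2 = c := Real.sq_sqrt hc0
  have hs0 : 0 ≤ s := Real.sqrt_nonneg c
  have hs1 : 1 < s := by nlinarith
  have ha0 : (0:ℝ) < a := by rw [hadef]; linarith
  have hac : a = c - 1 := by rw [hadef, hcdef]; ring
  have hD0 : (0:ℝ) < D := by linarith
  -- f : the smooth piece
  set f : ℝ → ℝ := fun θ => 1 / (2 * D) * (a * Real.exp θ + c / (1 + a * Real.exp θ) + 1)
    with hfdef
  have hhf : ∀ θ : ℝ, h θ = if θ < θ0 then s / D else f θ := hh
  -- e^{θ0}
  have hx0 : Real.exp θ0 = (s - 1) / a := by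
    rw [hθ0]
    exact Real.exp_log (div_pos (by linarith) ha0)
  have hu0 : a * Real.exp θ0 = s - 1 := by
    rw [hx0]; field_simp
  have hv0 : 1 + a * Real.exp θ0 = s := by rw [hu0]; ring
  -- positivity of f
  have hu : ∀ θ : ℝ, 0 < a * Real.exp θ := fun θ => mul_pos ha0 (Real.exp_pos θ)
  have hv : ∀ θ : ℝ, 0 < 1 + a * Real.exp θ := fun θ => by have := hu θ; linarith
  have hfpos : ∀ θ : ℝ, 0 < f θ := by
    intro θ
    have h1 := hu θ
    have h2 := hv θ
    have : 0 < c / (1 + a * Real.exp θ) := div_pos (by linarith) h2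
    rw [hfdef]
    have h2D : 0 < 1 / (2 * D) := by positivity
    have : 0 < a * Real.exp θ + c / (1 + a * Real.exp θ) + 1 := by linarith
    positivity
  -- derivative of f
  have hfd : ∀ θ : ℝ, HasDerivAt f
      (a * Real.exp θ * ((1 + a * Real.exp θ)^2 - c) / (2 * D * (1 + a * Real.exp θ)^2)) θ :=
    fun θ => f_hasDerivAt D a c θ hD rfl
  -- C3 : value match
  have hC3 : f θ0 = s / D := by
    rw [hfdef]
    simp only [hu0, hv0]
    have hs0' : s ≠ 0 := by linarith
    field_simp
    rw [show 1 + (s - 1) = s by ring]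
    field_simp
    nlinarith [hs2]
  -- C4 : derivative zero at θ0
  have hC4 : HasDerivAt f 0 θ0 := by
    have := hfd θ0
    rw [hv0, hs2, hu0] at this
    have hcne : c ≠ 0 := by linarith
    simpa [sub_self, mul_zero, zero_div, mul_comm] using this
  -- θ0 < 0
  have hθ0neg : θ0 < 0 := by
    rw [hθ0]
    apply Real.log_neg (div_pos (by linarith) ha0)
    rw [div_lt_one ha0, hac]
    nlinarith
  -- C5 : h 0 = 1
  have hC5 : h 0 = 1 := by
    rw [hhf 0, if_neg (by linarith : ¬ (0:ℝ) < θ0), hfdef]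
    simp only [Real.exp_zero, mul_one]
    have : 1 + a = c := by rw [hac]; ring
    rw [this]
    have hcne : c ≠ 0 := by linarith
    have hDne : D ≠ 0 := by linarith
    field_simp
    ring
  -- the global derivative function
  set g : ℝ → ℝ := fun θ => if θ < θ0 then 0 else
    a * Real.exp θ * ((1 + a * Real.exp θ)^2 - c)
      / ((1 + a * Real.exp θ) * ((1 + a * Real.exp θ)^2 + c)) with hgdef
  -- ratio simplification
  have hratio : ∀ θ : ℝ,
      (a * Real.exp θ * ((1 + a * Real.exp θ)^2 - c) / (2 * D * (1 + a * Real.exp θ)^2)) / f θ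
      = a * Real.exp θ * ((1 + a * Real.exp θ)^2 - c)
          / ((1 + a * Real.exp θ) * ((1 + a * Real.exp θ)^2 + c)) := by
    intro θ
    have h2 := hv θ
    have h2' : (1 + a * Real.exp θ) ≠ 0 := ne_of_gt h2
    have hDne : (2 * D) ≠ 0 := by positivity
    have hden : (1 + a * Real.exp θ)^2 + c ≠ 0 := by positivity
    rw [hfdef]
    field_simp
    ring
  -- log f has derivative g θ for θ ≥ θ0 (in fact the formula holds at every θ)
  have hlogf : ∀ θ : ℝ, HasDerivAt (fun t => Real.log (f t))
      (a * Real.exp θ * ((1 + a * Real.exp θ)^2 - c)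
        / ((1 + a * Real.exp θ) * ((1 + a * Real.exp θ)^2 + c))) θ := by
    intro θ
    have := (hfd θ).log (ne_of_gt (hfpos θ))
    rwa [hratio θ] at this
  -- main derivative claim
  have hDeriv : ∀ θ : ℝ, HasDerivAt (fun t => Real.log (h t)) (g θ) θ := by
    have hfun : (fun t => Real.log (h t))
        = fun t => if t < θ0 then Real.log (s / D) else Real.log (f t) := by
      funext t
      rw [hhf t, apply_ite Real.log]
    intro θ
    rw [hfun]
    rcases lt_trichotomy θ θ0 with hlt | heq | hgt
    · have hmem : {t : ℝ | t < θ0} ∈ nhds θ := isOpen_Iio.mem_nhds hlt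
      have : HasDerivAt (fun _ : ℝ => Real.log (s / D)) 0 θ := hasDerivAt_const θ _
      refine (this.congr_of_eventuallyEq ?_).congr_deriv ?_
      · filter_upwards [hmem] with t ht
        simp [ht]
      · rw [hgdef]; simp [hlt]
    · subst heq
      have hg0 : g θ = 0 := by
        rw [hgdef]
        simp only [lt_irrefl, if_false]
        rw [hv0, hs2, hu0]
        simp
      rw [hg0]
      apply glue_hasDerivAt (hasDerivAt_const _ _)
      · have := hlogf θ
        rw [hv0, hs2, hu0] at this
        simpa using this
      · rw [hC3]
    · have hmem : {t : ℝ | θ0 < t} ∈ nhds θ := isOpen_Ioi.mem_nhds hgt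
      have hgθ : g θ = a * Real.exp θ * ((1 + a * Real.exp θ)^2 - c)
          / ((1 + a * Real.exp θ) * ((1 + a * Real.exp θ)^2 + c)) := by
        rw [hgdef]; simp [not_lt.2 hgt.le]
      rw [hgθ]
      refine (hlogf θ).congr_of_eventuallyEq ?_
      filter_upwards [hmem] with t ht
      simp [not_lt.2 ht.le]
  have hdiff : Differentiable ℝ (fun θ => Real.log (h θ)) :=
    fun θ => (hDeriv θ).differentiableAt
  -- monotonicity of g
  have hvlb : ∀ θ : ℝ, θ0 ≤ θ → s ≤ 1 + a * Real.exp θ := by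
    intro θ hθ
    have : Real.exp θ0 ≤ Real.exp θ := Real.exp_le_exp.2 hθ
    have : a * Real.exp θ0 ≤ a * Real.exp θ := by
      exact mul_le_mul_of_nonneg_left this ha0.le
    rw [hu0] at this
    linarith
  have hgmono : Monotone g := by
    intro θ1 θ2 h12
    rw [hgdef]
    by_cases h1 : θ1 < θ0
    · by_cases h2 : θ2 < θ0
      · simp [h1, h2]
      · simp only [h1, if_true, h2, if_false]
        push_neg at h2
        have hv2 := hvlb θ2 h2
        have hv2sq : c ≤ (1 + a * Real.exp θ2)^2 := by nlinarith
        apply div_nonneg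
        · exact mul_nonneg (hu θ2).le (by linarith)
        · have := hv θ2
          positivity
    · have h2 : ¬ θ2 < θ0 := fun hc' => h1 (lt_of_le_of_lt h12 hc')
      simp only [h1, if_false, h2]
      push_neg at h1 h2
      set v1 : ℝ := 1 + a * Real.exp θ1 with hv1def
      set v2 : ℝ := 1 + a * Real.exp θ2 with hv2def
      have hv1s : s ≤ v1 := hvlb θ1 h1
      have hv1sq : c ≤ v1^2 := by nlinarith
      have hv11 : 1 ≤ v1 := by nlinarith
      have hv12 : v1 ≤ v2 := by
        have : Real.exp θ1 ≤ Real.exp θ2 := Real.exp_le_exp.2 h12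
        rw [hv1def, hv2def]
        nlinarith
      have hv1pos : 0 < v1 := by linarith
      have hv2pos : 0 < v2 := by linarith
      have hd1 : 0 < v1 * (v1^2 + c) := by positivity
      have hd2 : 0 < v2 * (v2^2 + c) := by positivity
      have e1 : a * Real.exp θ1 = v1 - 1 := by rw [hv1def]; ring
      have e2 : a * Real.exp θ2 = v2 - 1 := by rw [hv2def]; ring
      rw [e1, e2, div_le_div_iff₀ hd1 hd2]
      exact key_ineq c v1 v2 hc3 hv11 hv1sq hv12
  -- convexity
  have hconv : ConvexOn ℝ Set.univ (fun θ => Real.log (h θ)) := by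
    apply Monotone.convexOn_univ_of_deriv hdiff
    have : deriv (fun θ => Real.log (h θ)) = g := funext fun θ => (hDeriv θ).deriv
    rw [this]
    exact hgmono
  exact ⟨hconv, hdiff, hC3, hC4, hC5⟩
end

section
/- Let $d\ge2$, and let $U_n = (S_n - \frac{d-1}{d}n)D_n$ where $S_n$ is the biased walk with $P(X_i=1)=\frac{2d-1}{2d}$ and $D_n = L_n - S_n$ in the natural coupling. Then $U_{n+1} = U_n + (X_{n+1} - \frac{d-1}{d})D_n + 1_{\{L_n=0\}}(1 - X_{n+1})(S_{n+1} - \frac{d-1}{d}(n+1))$, and taking expectations, $-4(n+1)P(L_n=0) \le \mathbb{E}U_{n+1} - \mathbb{E}U_n \le 0$. -/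
open MeasureTheory ProbabilityTheory

private def Lf (x : ℕ → ℤ) : ℕ → ℤ
  | 0 => 0
  | n + 1 => if Lf x n = 0 then 1 else Lf x n + x (n + 1)

private lemma Lf_congr {x y : ℕ → ℤ} : ∀ n, (∀ i, 1 ≤ i → i ≤ n → x i = y i) → Lf x n = Lf y n
  | 0, _ => rfl
  | n + 1, h => by
    have hn := Lf_congr n (fun i h1 h2 => h i h1 (h2.trans (Nat.le_succ n)))
    simp only [Lf, hn, h (n + 1) (by omega) le_rfl]

private def Dfun (n : ℕ) (y : (Finset.Icc 1 n : Finset ℕ) → ℤ) : ℝ :=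
  ((Lf (fun i => if h : i ∈ Finset.Icc 1 n then y ⟨i, h⟩ else 0) n
      - ∑ i ∈ Finset.range n,
          (fun i => if h : i ∈ Finset.Icc 1 n then y ⟨i, h⟩ else 0) (i + 1) : ℤ) : ℝ)

private def Xfun (n : ℕ) (c : ℝ) (y : (({n + 1} : Finset ℕ) : Finset ℕ) → ℤ) : ℝ :=
  ((y ⟨n + 1, Finset.mem_singleton_self _⟩ : ℤ) : ℝ) - c

theorem stmt16 {Ω : Type*} [MeasurableSpace Ω] (μ : Measure Ω) [IsProbabilityMeasure μ]
    (d : ℕ) (hd : 2 ≤ d) (X L S : ℕ → Ω → ℤ) (D U : ℕ → Ω → ℝ)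
    (hmX : ∀ i, Measurable (X i)) (hmL : ∀ n, Measurable (L n))
    (hXpm : ∀ i ω, X i ω = 1 ∨ X i ω = -1)
    (hindep : iIndepFun X μ)
    (h1 : ∀ i, μ {ω | X i ω = 1} = ENNReal.ofReal ((2 * d - 1) / (2 * d)))
    (hL0 : ∀ ω, L 0 ω = 0)
    (hLrec : ∀ n ω, L (n + 1) ω = if L n ω = 0 then 1 else L n ω + X (n + 1) ω)
    (hS : ∀ n ω, S n ω = ∑ i ∈ Finset.range n, X (i + 1) ω)
    (hD : ∀ n ω, D n ω = (L n ω : ℝ) - (S n ω : ℝ))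
    (hU : ∀ n ω, U n ω = ((S n ω : ℝ) - (d - 1) / d * n) * D n ω) :
    (∀ n ω, U (n + 1) ω
      = U n ω + ((X (n + 1) ω : ℝ) - (d - 1) / d) * D n ω
        + (if L n ω = 0
            then (1 - (X (n + 1) ω : ℝ)) * ((S (n + 1) ω : ℝ) - (d - 1) / d * (n + 1))
            else 0)) ∧
    ∀ n : ℕ,
      -4 * (n + 1) * (μ {ω | L n ω = 0}).toReal
          ≤ (∫ ω, U (n + 1) ω ∂μ) - ∫ ω, U n ω ∂μ ∧
      (∫ ω, U (n + 1) ω ∂μ) - ∫ ω, U n ω ∂μ ≤ 0 := by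
  have hd2 : (2 : ℝ) ≤ d := by exact_mod_cast hd
  have hd0 : (0 : ℝ) < d := by linarith
  set c : ℝ := ((d : ℝ) - 1) / d with hc
  have hc0 : 0 ≤ c := div_nonneg (by linarith) hd0.le
  have hc1 : c ≤ 1 := by rw [div_le_one hd0]; linarith
  have hSrec : ∀ n ω, S (n + 1) ω = S n ω + X (n + 1) ω := by
    intro n ω; rw [hS, hS, Finset.sum_range_succ]
  have hId : ∀ n ω, U (n + 1) ω
      = U n ω + ((X (n + 1) ω : ℝ) - c) * D n ω
        + (if L n ω = 0
            then (1 - (X (n + 1) ω : ℝ)) * ((S (n + 1) ω : ℝ) - c * (n + 1))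
            else 0) := by
    intro n ω
    have hs : ((S (n + 1) ω : ℤ) : ℝ) = (S n ω : ℝ) + (X (n + 1) ω : ℝ) := by
      rw [hSrec]; push_cast; ring
    by_cases h : L n ω = 0
    · have hL1 : L (n + 1) ω = 1 := by rw [hLrec, if_pos h]
      rw [if_pos h, hU, hU, hD, hD, hL1, h, hs]
      push_cast
      ring
    · have hL1 : L (n + 1) ω = L n ω + X (n + 1) ω := by rw [hLrec, if_neg h]
      rw [if_neg h, hU, hU, hD, hD, hL1, hs]
      push_cast
      ring
  refine ⟨hId, ?_⟩
  -- basic deterministic bounds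
  have hLS : ∀ n ω, S n ω ≤ L n ω ∧ 0 ≤ L n ω ∧ L n ω ≤ n := by
    intro n
    induction n with
    | zero => intro ω; rw [hL0, hS]; simp
    | succ n ih =>
      intro ω
      obtain ⟨h1', h2', h3'⟩ := ih ω
      rw [hSrec, hLrec]
      by_cases h : L n ω = 0
      · rw [if_pos h]
        rw [h] at h1'
        rcases hXpm (n + 1) ω with h' | h' <;> rw [h'] <;>
          exact ⟨by omega, by omega, by omega⟩
      · rw [if_neg h]
        rcases hXpm (n + 1) ω with h' | h' <;> rw [h'] <;>
          exact ⟨by omega, by omega, by omega⟩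
  have hSb : ∀ (n : ℕ) (ω : Ω), -(n : ℤ) ≤ S n ω ∧ S n ω ≤ (n : ℤ) := by
    intro n
    induction n with
    | zero => intro ω; rw [hS]; simp
    | succ n ih =>
      intro ω
      obtain ⟨h1', h2'⟩ := ih ω
      rcases hXpm (n + 1) ω with h' | h' <;> rw [hSrec, h'] <;>
        exact ⟨by push_cast; omega, by push_cast; omega⟩
  -- measurability
  have mS : ∀ n, Measurable (S n) := by
    intro n
    have hfe : S n = fun ω => ∑ i ∈ Finset.range n, X (i + 1) ω := funext fun ω => hS n ω
    rw [hfe]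
    exact Finset.measurable_sum _ fun i _ => hmX _
  have mcast : ∀ f : Ω → ℤ, Measurable f → Measurable (fun ω => ((f ω : ℤ) : ℝ)) :=
    fun f hf => Measurable.comp Measurable.of_discrete hf
  have mD : ∀ n, Measurable (D n) := by
    intro n
    have hfe : D n = fun ω => ((L n ω : ℝ) - (S n ω : ℝ)) := funext fun ω => hD n ω
    rw [hfe]
    exact (mcast _ (hmL n)).sub (mcast _ (mS n))
  have mU : ∀ n, Measurable (U n) := by
    intro n
    have hfe : U n = fun ω => ((S n ω : ℝ) - c * n) * D n ω := funext fun ω => hU n ω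
    rw [hfe]
    exact ((mcast _ (mS n)).sub measurable_const).mul (mD n)
  -- integrability helper
  have intOf : ∀ (f : Ω → ℝ) (C : ℝ), Measurable f → (∀ ω, |f ω| ≤ C) → Integrable f μ := by
    intro f C hf hb
    exact (integrable_const C).mono' hf.aestronglyMeasurable
      (ae_of_all _ fun ω => by simpa [Real.norm_eq_abs] using hb ω)
  have hDb : ∀ n ω, |D n ω| ≤ 2 * n := by
    intro n ω
    obtain ⟨hl1, hl2, hl3⟩ := hLS n ω
    obtain ⟨hs1, hs2⟩ := hSb n ω
    have c1 : (0 : ℝ) ≤ L n ω := by exact_mod_cast hl2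
    have c2 : (L n ω : ℝ) ≤ n := by exact_mod_cast hl3
    have c3 : -(n : ℝ) ≤ S n ω := by exact_mod_cast hs1
    have c4 : (S n ω : ℝ) ≤ n := by exact_mod_cast hs2
    rw [hD, abs_le]; constructor <;> linarith
  have hUb : ∀ n ω, |U n ω| ≤ (2 * n) * (2 * n) := by
    intro n ω
    rw [hU, abs_mul]
    have hn0 : (0 : ℝ) ≤ n := Nat.cast_nonneg n
    have h1' : |(S n ω : ℝ) - c * n| ≤ 2 * n := by
      obtain ⟨hs1, hs2⟩ := hSb n ω
      have c3 : -(n : ℝ) ≤ S n ω := by exact_mod_cast hs1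
      have c4 : (S n ω : ℝ) ≤ n := by exact_mod_cast hs2
      have h5 : 0 ≤ c * n := mul_nonneg hc0 hn0
      have h6 : c * n ≤ n := by nlinarith
      rw [abs_le]; constructor <;> linarith
    exact mul_le_mul h1' (hDb n ω) (abs_nonneg _) (by positivity)
  have intU : ∀ n, Integrable (U n) μ := fun n => intOf _ _ (mU n) (hUb n)
  have intD : ∀ n, Integrable (D n) μ := fun n => intOf _ _ (mD n) (hDb n)
  have hLfX : ∀ m ω, Lf (fun i => X i ω) m = L m ω := by
    intro m ω
    induction m with
    | zero => rw [hL0]; rfl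
    | succ k ih => rw [hLrec]; simp only [Lf, ih]
  -- expectation of a single step
  have EX : ∀ i, ∫ ω, ((X i ω : ℤ) : ℝ) ∂μ = c := by
    intro i
    have hAm1 : MeasurableSet {ω | X i ω = 1} := (hmX i) (measurableSet_singleton 1)
    have hrw : (fun ω => ((X i ω : ℤ) : ℝ))
        = fun ω => 2 * Set.indicator {ω | X i ω = 1} (fun _ => (1 : ℝ)) ω - 1 := by
      funext ω
      rcases hXpm i ω with h | h
      · rw [Set.indicator_of_mem (by exact h), h]; norm_num
      · rw [Set.indicator_of_notMem (by simp [Set.mem_setOf_eq, h]), h]; norm_num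
    have hint : Integrable (fun ω => Set.indicator {ω | X i ω = 1} (fun _ => (1 : ℝ)) ω) μ :=
      (integrable_const (1 : ℝ)).indicator hAm1
    rw [hrw, integral_sub (hint.const_mul 2) (integrable_const 1), integral_const_mul,
      integral_indicator_const _ hAm1, integral_const, measureReal_def, h1 i,
      ENNReal.toReal_ofReal (div_nonneg (by linarith) (by linarith))]
    simp only [smul_eq_mul, measure_univ, probReal_univ, ENNReal.toReal_one, mul_one, one_mul]
    rw [hc]
    field_simp
    ring
  -- now fix n
  intro n
  have hAm : MeasurableSet {ω | L n ω = 0} := (hmL n) (measurableSet_singleton 0)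
  have mXc : Measurable (fun ω => ((X (n + 1) ω : ℝ) - c)) :=
    (mcast _ (hmX (n + 1))).sub measurable_const
  have hXcb : ∀ ω, |(X (n + 1) ω : ℝ) - c| ≤ 2 := by
    intro ω
    rcases hXpm (n + 1) ω with h | h <;> rw [h] <;> push_cast <;> rw [abs_le] <;>
      constructor <;> linarith
  have intXc : Integrable (fun ω => ((X (n + 1) ω : ℝ) - c)) μ := intOf _ 2 mXc hXcb
  have intXcD : Integrable (fun ω => ((X (n + 1) ω : ℝ) - c) * D n ω) μ := by
    refine intOf _ (2 * (2 * n)) (mXc.mul (mD n)) fun ω => ?_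
    rw [abs_mul]
    exact mul_le_mul (hXcb ω) (hDb n ω) (abs_nonneg _) (by norm_num)
  -- independence
  have hdisj : Disjoint (Finset.Icc 1 n) ({n + 1} : Finset ℕ) := by
    rw [Finset.disjoint_left]
    intro a ha hb
    rw [Finset.mem_Icc] at ha
    rw [Finset.mem_singleton] at hb
    omega
  have h0 := hindep.indepFun_finset (Finset.Icc 1 n) ({n + 1} : Finset ℕ) hdisj hmX
  have h2 := h0.comp (φ := Dfun n) (ψ := Xfun n c) Measurable.of_discrete Measurable.of_discrete
  have e1 : (Dfun n ∘ fun a (i : (Finset.Icc 1 n : Finset ℕ)) => X i a) = D n := by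
    funext ω
    simp only [Function.comp_apply, Dfun]
    have hx : ∀ i, 1 ≤ i → i ≤ n →
        (if h : i ∈ Finset.Icc 1 n then X (⟨i, h⟩ : (Finset.Icc 1 n : Finset ℕ)).1 ω else 0)
          = X i ω := by
      intro i hi1 hi2
      rw [dif_pos (Finset.mem_Icc.mpr ⟨hi1, hi2⟩)]
    have hLf : Lf (fun i => if h : i ∈ Finset.Icc 1 n
        then X (⟨i, h⟩ : (Finset.Icc 1 n : Finset ℕ)).1 ω else 0) n = L n ω := by
      rw [Lf_congr n (fun i a b => hx i a b)]
      exact hLfX n ω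
    have hSum : (∑ i ∈ Finset.range n, (if h : i + 1 ∈ Finset.Icc 1 n
        then X (⟨i + 1, h⟩ : (Finset.Icc 1 n : Finset ℕ)).1 ω else 0)) = S n ω := by
      rw [hS]
      refine Finset.sum_congr rfl fun i hi => ?_
      have := Finset.mem_range.mp hi
      exact hx (i + 1) (by omega) (by omega)
    rw [hD]
    push_cast [hLf, hSum]
    ring
  have e2 : (Xfun n c ∘ fun a (i : (({n + 1} : Finset ℕ) : Finset ℕ)) => X i a)
      = fun ω => ((X (n + 1) ω : ℝ) - c) := rfl
  rw [e1, e2] at h2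
  -- ∫ (X - c) D = 0
  have EXc : ∫ ω, ((X (n + 1) ω : ℝ) - c) ∂μ = 0 := by
    rw [integral_sub (intOf _ 1 (mcast _ (hmX (n + 1)))
      (fun ω => by rcases hXpm (n + 1) ω with h | h <;> rw [h] <;> norm_num))
      (integrable_const c), EX, integral_const]
    simp
  have Emul : ∫ ω, ((X (n + 1) ω : ℝ) - c) * D n ω ∂μ = 0 := by
    have h3 := IndepFun.integral_mul_eq_mul_integral (IndepFun.symm h2) intXc.aestronglyMeasurable (intD n).aestronglyMeasurable
    calc ∫ ω, ((X (n + 1) ω : ℝ) - c) * D n ω ∂μ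
        = ∫ ω, ((fun ω => ((X (n + 1) ω : ℝ) - c)) * D n) ω ∂μ := rfl
      _ = (∫ ω, ((X (n + 1) ω : ℝ) - c) ∂μ) * ∫ ω, D n ω ∂μ := h3
      _ = 0 := by rw [EXc]; ring
  -- the indicator term
  set T : Ω → ℝ := fun ω => if L n ω = 0
      then (1 - (X (n + 1) ω : ℝ)) * ((S (n + 1) ω : ℝ) - c * (n + 1)) else 0 with hT
  have mT : Measurable T := by
    refine Measurable.ite hAm ?_ measurable_const
    exact (measurable_const.sub (mcast _ (hmX (n + 1)))).mul
      ((mcast _ (mS (n + 1))).sub measurable_const)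
  have hTbounds : ∀ ω, -4 * ((n : ℝ) + 1) * (if L n ω = 0 then (1 : ℝ) else 0) ≤ T ω ∧ T ω ≤ 0 := by
    intro ω
    rw [hT]
    by_cases h : L n ω = 0
    · simp only [if_pos h]
      have hsl : S n ω ≤ 0 := by
        have := (hLS n ω).1; omega
      have c3 : -(n : ℝ) ≤ S n ω := by exact_mod_cast (hSb n ω).1
      have c4 : (S n ω : ℝ) ≤ 0 := by exact_mod_cast hsl
      have hn0 : (0 : ℝ) ≤ n := Nat.cast_nonneg n
      have hcn0 : 0 ≤ c * ((n : ℝ) + 1) := mul_nonneg hc0 (by linarith)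
      have hcn1 : c * ((n : ℝ) + 1) ≤ (n : ℝ) + 1 := by nlinarith
      have hs : ((S (n + 1) ω : ℤ) : ℝ) = (S n ω : ℝ) + (X (n + 1) ω : ℝ) := by
        rw [hSrec]; push_cast; ring
      rcases hXpm (n + 1) ω with hx | hx <;> rw [hx] at hs <;> rw [hs, hx] <;>
        push_cast <;> constructor <;> nlinarith
    · simp only [if_neg h]
      norm_num
  have intT : Integrable T μ := by
    refine intOf _ (4 * ((n : ℝ) + 1)) mT fun ω => ?_
    obtain ⟨hlo, hhi⟩ := hTbounds ω
    have hp : (0 : ℝ) ≤ 4 * ((n : ℝ) + 1) := by positivity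
    rw [abs_le]
    constructor
    · by_cases h : L n ω = 0
      · rw [if_pos h] at hlo; linarith
      · rw [if_neg h] at hlo; norm_num at hlo; linarith
    · linarith
  -- key decomposition of the integral
  have key : (∫ ω, U (n + 1) ω ∂μ) - ∫ ω, U n ω ∂μ = ∫ ω, T ω ∂μ := by
    have hsplit : (fun ω => U (n + 1) ω)
        = fun ω => (U n ω + ((X (n + 1) ω : ℝ) - c) * D n ω) + T ω :=
      funext fun ω => hId n ω
    rw [show (∫ ω, U (n + 1) ω ∂μ)
        = ∫ ω, ((U n ω + ((X (n + 1) ω : ℝ) - c) * D n ω) + T ω) ∂μ from by rw [← hsplit],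
      integral_add (show Integrable (fun ω => U n ω + ((X (n + 1) ω : ℝ) - c) * D n ω) μ
        from (intU n).add intXcD) intT, integral_add (intU n) intXcD, Emul]
    ring
  constructor
  · rw [key]
    have hfi : (fun ω => if L n ω = 0 then (1 : ℝ) else 0)
        = Set.indicator {ω | L n ω = 0} (fun _ => (1 : ℝ)) := by
      funext ω
      by_cases h : L n ω = 0 <;> simp [Set.indicator, h]
    have hp4 : (0 : ℝ) ≤ 4 * ((n : ℝ) + 1) := by positivity
    have intIndic : Integrable (fun ω => -4 * ((n : ℝ) + 1) *
        (if L n ω = 0 then (1 : ℝ) else 0)) μ := by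
      refine intOf _ (4 * ((n : ℝ) + 1))
        (measurable_const.mul (Measurable.ite hAm measurable_const measurable_const)) fun ω => ?_
      by_cases h : L n ω = 0
      · rw [if_pos h, mul_one, abs_of_nonpos (by linarith)]; linarith
      · rw [if_neg h, mul_zero, abs_zero]; linarith
    have hmono := integral_mono intIndic intT fun ω => (hTbounds ω).1
    calc -4 * ((n : ℝ) + 1) * (μ {ω | L n ω = 0}).toReal
        = ∫ ω, -4 * ((n : ℝ) + 1) * (if L n ω = 0 then (1 : ℝ) else 0) ∂μ := by
          rw [integral_const_mul, hfi, integral_indicator_const _ hAm]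
          simp [mul_comm, measureReal_def]
      _ ≤ ∫ ω, T ω ∂μ := hmono
  · rw [key]
    exact integral_nonpos fun ω => (hTbounds ω).2
end
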